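/- For n ≥ 5, the Δ-set of leaf-labelled trees (T_n) is uniquely fillable in dimension n: given trees x_0,...,x_n ∈ T_{n-1} satisfying ∂_i(x_j) = ∂_{j-1}(x_i) for all 0 ≤ i < j ≤ n, there exists a unique tree y ∈ T_n with ∂_i(y) = x_i for all i. -/

import Mathlib

set_option linter.unusedSectionVars false

/-- A tree without bivalent vertices whose leaves are labelled bijectively by `A`,
encoded (via the split-equivalence theorem) by its set of splits: each internal
edge of the tree determines the bipartition of the leaf set into the leaves on
its two sides; both sides have at least two elements and any two splits are
compatible (some pair of opposite sides is disjoint). -/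
structure LTree (A : Type*) [Fintype A] [DecidableEq A] where
  splits : Finset (Finset A)
  compl_mem : ∀ B ∈ splits, Bᶜ ∈ splits
  two_le : ∀ B ∈ splits, 2 ≤ B.card
  two_le_compl : ∀ B ∈ splits, 2 ≤ Bᶜ.card
  compat : ∀ B ∈ splits, ∀ C ∈ splits,
    B ∩ C = ∅ ∨ B ∩ Cᶜ = ∅ ∨ Bᶜ ∩ C = ∅ ∨ Bᶜ ∩ Cᶜ = ∅

namespace LTree

variable {A B : Type*} [Fintype A] [DecidableEq A] [Fintype B] [DecidableEq B]

@[ext] theorem ext' {t t' : LTree A} (h : t.splits = t'.splits) : t = t' := by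
  cases t; cases t'; simpa using h

private lemma image_compl (e : A ≃ B) (S : Finset A) :
    (S.image e)ᶜ = Sᶜ.image e := by
  ext b
  simp only [Finset.mem_compl, Finset.mem_image]
  constructor
  · intro h
    exact ⟨e.symm b, fun hm => h ⟨e.symm b, hm, e.apply_symm_apply b⟩, e.apply_symm_apply b⟩
  · rintro ⟨a, ha, rfl⟩ ⟨a', ha', he⟩
    exact ha (e.injective he ▸ ha')

/-- Relabelling the leaves of a tree along a bijection of the label sets. -/
def relabel (e : A ≃ B) (t : LTree A) : LTree B where
  splits := t.splits.image (Finset.image e)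
  compl_mem := by
    simp only [Finset.mem_image, forall_exists_index, and_imp]
    rintro _ C hC rfl
    exact ⟨Cᶜ, t.compl_mem C hC, (image_compl e C).symm⟩
  two_le := by
    simp only [Finset.mem_image, forall_exists_index, and_imp]
    rintro _ C hC rfl
    rw [Finset.card_image_of_injective _ e.injective]
    exact t.two_le C hC
  two_le_compl := by
    simp only [Finset.mem_image, forall_exists_index, and_imp]
    rintro _ C hC rfl
    rw [image_compl e C, Finset.card_image_of_injective _ e.injective]
    exact t.two_le_compl C hC
  compat := by
    simp only [Finset.mem_image, forall_exists_index, and_imp]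
    rintro _ C hC rfl _ D hD rfl
    have key : ∀ S T : Finset A, S ∩ T = ∅ → (S.image e) ∩ (T.image e) = ∅ := by
      intro S T h
      rw [← Finset.image_inter _ _ e.injective, h, Finset.image_empty]
    rw [image_compl e C, image_compl e D]
    rcases t.compat C hC D hD with h | h | h | h
    · exact Or.inl (key _ _ h)
    · exact Or.inr (Or.inl (key _ _ h))
    · exact Or.inr (Or.inr (Or.inl (key _ _ h)))
    · exact Or.inr (Or.inr (Or.inr (key _ _ h)))

private lemma subtype_compl (μ : A) (S : Finset A) :
    (S.subtype (· ≠ μ))ᶜ = Sᶜ.subtype (· ≠ μ) := by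
  ext a
  simp [Finset.mem_subtype]

private lemma subtype_inter (μ : A) (S T : Finset A) :
    (S.subtype (· ≠ μ)) ∩ (T.subtype (· ≠ μ)) = (S ∩ T).subtype (· ≠ μ) := by
  ext a
  simp [Finset.mem_subtype]

/-- The map `∂_μ`: erase the leaf labelled `μ` (and smooth out any resulting
bivalent vertex).  In the split encoding this restricts every split to
`A \ {μ}` and discards the splits that become degenerate. -/
def del (t : LTree A) (μ : A) : LTree {a : A // a ≠ μ} where
  splits := (t.splits.image (fun C => C.subtype (· ≠ μ))).filter
      (fun C => 2 ≤ C.card ∧ 2 ≤ Cᶜ.card)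
  compl_mem := by
    simp only [Finset.mem_filter, Finset.mem_image, forall_exists_index, and_imp]
    rintro _ C hC rfl h1 h2
    refine ⟨⟨Cᶜ, t.compl_mem C hC, (subtype_compl μ C).symm⟩, ?_, ?_⟩
    · exact h2
    · rwa [compl_compl]
  two_le := fun C hC => ((Finset.mem_filter.mp hC).2).1
  two_le_compl := fun C hC => ((Finset.mem_filter.mp hC).2).2
  compat := by
    simp only [Finset.mem_filter, Finset.mem_image, forall_exists_index, and_imp]
    rintro _ C hC rfl - - _ D hD rfl - -
    have key : ∀ S T : Finset A, S ∩ T = ∅ →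
        (S.subtype (· ≠ μ)) ∩ (T.subtype (· ≠ μ)) = ∅ := by
      intro S T h
      rw [subtype_inter, h]
      ext a
      simp [Finset.mem_subtype]
    rw [subtype_compl μ C, subtype_compl μ D]
    rcases t.compat C hC D hD with h | h | h | h
    · exact Or.inl (key _ _ h)
    · exact Or.inr (Or.inl (key _ _ h))
    · exact Or.inr (Or.inr (Or.inl (key _ _ h)))
    · exact Or.inr (Or.inr (Or.inr (key _ _ h)))

/-- `S` is a "block" of `t`: the set of leaves hanging off a single edge,
i.e. either a single leaf or one side of an internal edge. -/
def Block (t : LTree A) (S : Finset A) : Prop := S.card = 1 ∨ S ∈ t.splits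

/-- Two leaves `α`, `β` of `t` are adjacent if either they are attached to the
same vertex (no split separates them), or their attachment vertices are both
trivalent and joined by an edge (there is a split separating them such that on
each side, removing the leaf leaves a single block). -/
def Adjacent (t : LTree A) (α β : A) : Prop :=
  (∀ C ∈ t.splits, (α ∈ C ↔ β ∈ C)) ∨
  ∃ C ∈ t.splits, α ∈ C ∧ β ∉ C ∧ t.Block (C.erase α) ∧ t.Block (Cᶜ.erase β)

end LTree

/-- The face map `∂_i : T_{n+1} → T_n` on isomorphism classes of trees with
leaves labelled by `{0, …, n+1}`: erase the leaf labelled `i`, relabel the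
remaining leaves order-preservingly, and smooth any resulting bivalent vertex. -/
def LTree.face {n : ℕ} (i : Fin (n + 2)) (t : LTree (Fin (n + 2))) : LTree (Fin (n + 1)) :=
  (t.del i).relabel (finSuccAboveEquiv i).symm

namespace TreeFill

open Finset

lemma val_succAbove {n : ℕ} (p : Fin (n+1)) (i : Fin n) :
    (p.succAbove i : ℕ) = if (i : ℕ) < (p : ℕ) then (i : ℕ) else (i : ℕ) + 1 := by
  rw [Fin.succAbove]
  split_ifs with h1 h2 h2 <;> simp_all [Fin.lt_def]

lemma bd1 {m i j : ℕ} (hij : i < j) (hj : j ≤ m + 5) : i < m + 5 := by omega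
lemma bd2 {m j : ℕ} (hj : j ≤ m + 5) : j < m + 6 := by omega
lemma bd3 {m i j : ℕ} (hij : i < j) (hj : j ≤ m + 5) : j - 1 < m + 5 := by omega
lemma bd4 {m i j : ℕ} (hij : i < j) (hj : j ≤ m + 5) : i < m + 6 := by omega

lemma comp_succAbove (m i j : ℕ) (hij : i < j) (hj : j ≤ m + 5) (a : Fin (m+4)) :
    (⟨j, bd2 hj⟩ : Fin (m+6)).succAbove ((⟨i, bd1 hij hj⟩ : Fin (m+5)).succAbove a)
      = (⟨i, bd4 hij hj⟩ : Fin (m+6)).succAbove ((⟨j-1, bd3 hij hj⟩ : Fin (m+5)).succAbove a) := by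
  apply Fin.ext
  rw [val_succAbove, val_succAbove, val_succAbove, val_succAbove]
  simp only []
  split_ifs <;> omega

variable {m : ℕ}

/-- The ambient split system of `x ν`, pushed into `Fin (m+6)` along `ν.succAbove`. -/
def sx (x : Fin (m + 6) → LTree (Fin (m + 5))) (ν : Fin (m + 6)) : Finset (Finset (Fin (m + 6))) :=
  (x ν).splits.image (Finset.image ν.succAbove)

lemma mem_sx {x : Fin (m + 6) → LTree (Fin (m + 5))} {ν : Fin (m+6)} {G : Finset (Fin (m+6))} :
    G ∈ sx x ν ↔ ∃ T ∈ (x ν).splits, G = T.image ν.succAbove := by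
  simp [sx, eq_comm]

lemma image_succAbove_compl {n : ℕ} (ν : Fin (n+1)) (T : Finset (Fin n)) :
    Tᶜ.image ν.succAbove = (T.image ν.succAbove)ᶜ.erase ν := by
  ext b
  simp only [Finset.mem_image, Finset.mem_compl, Finset.mem_erase]
  constructor
  · rintro ⟨a, ha, rfl⟩
    refine ⟨ν.succAbove_ne a, ?_⟩
    rintro ⟨a', ha', h⟩
    exact ha (Fin.succAbove_right_injective h ▸ ha')
  · rintro ⟨hbν, hb⟩
    obtain ⟨a, rfl⟩ := Fin.exists_succAbove_eq hbν
    exact ⟨a, fun ha => hb ⟨a, ha, rfl⟩, rfl⟩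

lemma sx_not_mem {x : Fin (m + 6) → LTree (Fin (m + 5))} {ν : Fin (m+6)} {G : Finset (Fin (m+6))}
    (h : G ∈ sx x ν) : ν ∉ G := by
  obtain ⟨T, -, rfl⟩ := mem_sx.mp h
  simp only [Finset.mem_image, not_exists, not_and]
  exact fun a _ => ν.succAbove_ne a

lemma sx_card {x : Fin (m + 6) → LTree (Fin (m + 5))} {ν : Fin (m+6)} {G : Finset (Fin (m+6))}
    (h : G ∈ sx x ν) : 2 ≤ G.card := by
  obtain ⟨T, hT, rfl⟩ := mem_sx.mp h
  rw [Finset.card_image_of_injective _ Fin.succAbove_right_injective]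
  exact (x ν).two_le T hT

lemma sx_card_compl {x : Fin (m + 6) → LTree (Fin (m + 5))} {ν : Fin (m+6)}
    {G : Finset (Fin (m+6))} (h : G ∈ sx x ν) : 2 ≤ (Gᶜ.erase ν).card := by
  obtain ⟨T, hT, rfl⟩ := mem_sx.mp h
  rw [← image_succAbove_compl, Finset.card_image_of_injective _ Fin.succAbove_right_injective]
  exact (x ν).two_le_compl T hT

lemma sx_compl {x : Fin (m + 6) → LTree (Fin (m + 5))} {ν : Fin (m+6)}
    {G : Finset (Fin (m+6))} (h : G ∈ sx x ν) : Gᶜ.erase ν ∈ sx x ν := by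
  obtain ⟨T, hT, rfl⟩ := mem_sx.mp h
  exact mem_sx.mpr ⟨Tᶜ, (x ν).compl_mem T hT, (image_succAbove_compl ν T).symm⟩

lemma sx_compat {x : Fin (m + 6) → LTree (Fin (m + 5))} {ν : Fin (m+6)}
    {G H : Finset (Fin (m+6))} (hG : G ∈ sx x ν) (hH : H ∈ sx x ν) :
    G ∩ H = ∅ ∨ G \ H = ∅ ∨ H \ G = ∅ ∨ (G ∪ H)ᶜ.erase ν = ∅ := by
  obtain ⟨T, hT, rfl⟩ := mem_sx.mp hG
  obtain ⟨U, hU, rfl⟩ := mem_sx.mp hH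
  have inj : Function.Injective ν.succAbove := Fin.succAbove_right_injective
  have e1 : T.image ν.succAbove ∩ U.image ν.succAbove = (T ∩ U).image ν.succAbove :=
    (Finset.image_inter T U inj).symm
  have e2 : T.image ν.succAbove \ U.image ν.succAbove = (T \ U).image ν.succAbove :=
    (Finset.image_sdiff T U inj).symm
  have e3 : U.image ν.succAbove \ T.image ν.succAbove = (U \ T).image ν.succAbove :=
    (Finset.image_sdiff U T inj).symm
  have e4 : (T.image ν.succAbove ∪ U.image ν.succAbove)ᶜ.erase ν
      = ((T ∪ U)ᶜ).image ν.succAbove := by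
    rw [← Finset.image_union, image_succAbove_compl]
  rw [e1, e2, e3, e4]
  rcases (x ν).compat T hT U hU with h | h | h | h
  · exact Or.inl (by rw [h]; simp)
  · exact Or.inr (Or.inl (by rw [sdiff_eq, show T ⊓ Uᶜ = T ∩ Uᶜ from rfl, h]; simp))
  · exact Or.inr (Or.inr (Or.inl (by
      rw [sdiff_eq, show U ⊓ Tᶜ = Tᶜ ∩ U from inter_comm U Tᶜ, h]; simp)))
  · exact Or.inr (Or.inr (Or.inr (by rw [compl_union, h]; simp)))

end TreeFill
namespace TreeFill
open Finset

lemma subtype_image_erase {n N : ℕ} (p : Fin (n+2)) (f : Fin (n+2) → Fin N)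
    (T : Finset (Fin (n+2))) :
    (T.subtype (· ≠ p)).image (fun a => f a.val) = (T.erase p).image f := by
  ext b
  simp only [Finset.mem_image, Finset.mem_subtype, Finset.mem_erase]
  constructor
  · rintro ⟨⟨a, hap⟩, ha, rfl⟩
    exact ⟨a, ⟨hap, ha⟩, rfl⟩
  · rintro ⟨a, ⟨hap, ha⟩, rfl⟩
    exact ⟨⟨a, hap⟩, ha, rfl⟩

lemma card_subtype_ne {n : ℕ} (p : Fin (n+2)) (T : Finset (Fin (n+2))) :
    (T.subtype (· ≠ p)).card = (T.erase p).card := by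
  rw [Finset.card_subtype, Finset.filter_ne' T p]

/-- Ambient characterization of the splits of a face. -/
lemma amb_face {k N : ℕ} (t : LTree (Fin (k+2))) (p : Fin (k+2)) (f : Fin (k+2) → Fin N)
    (hf : Function.Injective f) (G : Finset (Fin N)) :
    (∃ S ∈ (LTree.face p t).splits, G = S.image (fun a => f (p.succAbove a))) ↔
    (∃ T ∈ t.splits, G = (T.image f).erase (f p) ∧ 2 ≤ ((T.image f).erase (f p)).card ∧
      2 ≤ ((Tᶜ.image f).erase (f p)).card) := by
  have hcards : ∀ T : Finset (Fin (k+2)),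
      ((T.image f).erase (f p)).card = (T.subtype (· ≠ p)).card := by
    intro T
    rw [card_subtype_ne, ← Finset.image_erase hf, Finset.card_image_of_injective _ hf]
  have hval : ∀ a : {a : Fin (k+2) // a ≠ p},
      p.succAbove ((finSuccAboveEquiv p).symm a) = a.val := by
    intro a
    have := (finSuccAboveEquiv p).apply_symm_apply a
    exact congrArg Subtype.val this
  have himg : ∀ S' : Finset {a : Fin (k+2) // a ≠ p},
      (S'.image ((finSuccAboveEquiv p).symm)).image (fun a => f (p.succAbove a))
        = S'.image (fun a => f a.val) := by
    intro S'
    rw [Finset.image_image]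
    apply Finset.image_congr
    intro a _
    simp only [Function.comp_apply, hval a]
  constructor
  · rintro ⟨S, hS, rfl⟩
    simp only [LTree.face, LTree.relabel, Finset.mem_image] at hS
    obtain ⟨S', hS', rfl⟩ := hS
    simp only [LTree.del, Finset.mem_filter, Finset.mem_image] at hS'
    obtain ⟨⟨T, hT, rfl⟩, hc1, hc2⟩ := hS'
    refine ⟨T, hT, ?_, ?_, ?_⟩
    · rw [himg, subtype_image_erase, Finset.image_erase hf]
    · rw [hcards]; exact hc1
    · rw [hcards, ← LTree.subtype_compl]; exact hc2
  · rintro ⟨T, hT, rfl, hc1, hc2⟩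
    refine ⟨(T.subtype (· ≠ p)).image ((finSuccAboveEquiv p).symm), ?_, ?_⟩
    · simp only [LTree.face, LTree.relabel, Finset.mem_image]
      refine ⟨T.subtype (· ≠ p), ?_, rfl⟩
      simp only [LTree.del, Finset.mem_filter, Finset.mem_image]
      exact ⟨⟨T, hT, rfl⟩, by rw [← hcards]; exact hc1,
        by rw [LTree.subtype_compl, ← hcards]; exact hc2⟩
    · rw [himg, subtype_image_erase, Finset.image_erase hf]

end TreeFill
namespace TreeFill
open Finset

variable {m : ℕ} {x : Fin (m + 6) → LTree (Fin (m + 5))}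

lemma mem_amb_face_id (y : LTree (Fin (m+6))) (ν : Fin (m+6)) (G : Finset (Fin (m+6))) :
    (∃ S ∈ (LTree.face ν y).splits, G = S.image ν.succAbove) ↔
    (∃ C ∈ y.splits, G = C.erase ν ∧ 2 ≤ (C.erase ν).card ∧ 2 ≤ (Cᶜ.erase ν).card) := by
  have h := amb_face (k := m+4) (N := m+6) y ν (fun a => a) (fun a b h => h) G
  simpa using h

lemma face_eq_iff (y : LTree (Fin (m+6))) (ν : Fin (m+6)) :
    LTree.face ν y = x ν ↔ ∀ G : Finset (Fin (m+6)),
      (G ∈ sx x ν ↔ ∃ C ∈ y.splits, G = C.erase ν ∧ 2 ≤ (C.erase ν).card ∧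
        2 ≤ (Cᶜ.erase ν).card) := by
  constructor
  · intro h G
    rw [← mem_amb_face_id y ν G, mem_sx, ← h]
  · intro h
    apply LTree.ext'
    have hinj : Function.Injective (Finset.image ν.succAbove) :=
      Finset.image_injective Fin.succAbove_right_injective
    apply Finset.image_injective hinj
    ext G
    show G ∈ (LTree.face ν y).splits.image (Finset.image ν.succAbove) ↔ G ∈ sx x ν
    rw [Finset.mem_image]
    constructor
    · rintro ⟨S, hS, rfl⟩
      exact (h _).mpr ((mem_amb_face_id y ν _).mp ⟨S, hS, rfl⟩)
    · intro hG
      obtain ⟨S, hS, he⟩ := (mem_amb_face_id y ν G).mpr ((h G).mp hG)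
      exact ⟨S, hS, he.symm⟩

end TreeFill
namespace TreeFill
open Finset

variable {m : ℕ} {x : Fin (m + 6) → LTree (Fin (m + 5))}

/-- The simplicial compatibility hypothesis. -/
def Compat (x : Fin (m + 6) → LTree (Fin (m + 5))) : Prop :=
  ∀ (i j : ℕ) (hij : i < j) (hj : j ≤ m + 5),
    LTree.face ⟨i, bd1 hij hj⟩ (x ⟨j, bd2 hj⟩) =
      LTree.face ⟨j - 1, bd3 hij hj⟩ (x ⟨i, bd4 hij hj⟩)

lemma transfer_core {νi νj : Fin (m+6)} {p q : Fin (m+5)}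
    (hfaces : LTree.face p (x νj) = LTree.face q (x νi))
    (hfun : (fun a : Fin (m+4) => νj.succAbove (p.succAbove a))
      = (fun a => νi.succAbove (q.succAbove a)))
    (fpj : νj.succAbove p = νi) (fqi : νi.succAbove q = νj)
    {G : Finset (Fin (m+6))} (hG : G ∈ sx x νj) (h1 : 2 ≤ (G.erase νi).card)
    (h2 : 2 ≤ ((Gᶜ.erase νj).erase νi).card) :
    ∃ H ∈ sx x νi, H.erase νj = G.erase νi := by
  have inj : Function.Injective (νj.succAbove) := Fin.succAbove_right_injective
  have inj' : Function.Injective (νi.succAbove) := Fin.succAbove_right_injective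
  obtain ⟨T, hT, rfl⟩ := mem_sx.mp hG
  have step1 : ∃ S ∈ (LTree.face p (x νj)).splits,
      (T.image νj.succAbove).erase νi = S.image (fun a => νj.succAbove (p.succAbove a)) := by
    refine (amb_face (x νj) p νj.succAbove inj _).mpr ⟨T, hT, by rw [fpj], by rw [fpj]; exact h1,
      ?_⟩
    rw [fpj, image_succAbove_compl]
    exact h2
  rw [hfaces, hfun] at step1
  obtain ⟨T', hT', hG', -, -⟩ := (amb_face (x νi) q νi.succAbove inj' _).mp step1
  refine ⟨T'.image νi.succAbove, mem_sx.mpr ⟨T', hT', rfl⟩, ?_⟩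
  rw [fqi] at hG'
  exact hG'.symm

lemma transfer (hx : Compat x) {ν ν' : Fin (m+6)} (hne : ν ≠ ν') {G : Finset (Fin (m+6))}
    (hG : G ∈ sx x ν) (h1 : 2 ≤ (G.erase ν').card)
    (h2 : 2 ≤ ((Gᶜ.erase ν).erase ν').card) :
    ∃ H ∈ sx x ν', H.erase ν = G.erase ν' := by
  rcases Nat.lt_or_ge (ν' : ℕ) (ν : ℕ) with h | h
  · -- i := ν', j := ν
    have hj : (ν : ℕ) ≤ m + 5 := by omega
    have hfaces := hx ν' ν h hj
    have hfun : (fun a : Fin (m+4) =>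
        (⟨(ν : ℕ), by omega⟩ : Fin (m+6)).succAbove
          ((⟨(ν' : ℕ), by omega⟩ : Fin (m+5)).succAbove a))
        = (fun a => (⟨(ν' : ℕ), by omega⟩ : Fin (m+6)).succAbove
          ((⟨(ν : ℕ) - 1, by omega⟩ : Fin (m+5)).succAbove a)) :=
      funext (comp_succAbove m ν' ν h hj)
    have fpj : (ν : Fin (m+6)).succAbove ⟨(ν' : ℕ), by omega⟩ = ν' := by
      apply Fin.ext; rw [val_succAbove]; simp only [Fin.val_mk]; split_ifs <;> omega
    have fqi : (ν' : Fin (m+6)).succAbove ⟨(ν : ℕ) - 1, by omega⟩ = ν := by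
      apply Fin.ext; rw [val_succAbove]; simp only [Fin.val_mk]; split_ifs <;> omega
    exact transfer_core hfaces hfun fpj fqi hG h1 h2
  · have h' : (ν : ℕ) < (ν' : ℕ) := by
      rcases Nat.lt_or_ge (ν : ℕ) (ν' : ℕ) with h' | h'
      · exact h'
      · exact absurd (Fin.ext (by omega)) hne
    have hj : (ν' : ℕ) ≤ m + 5 := by omega
    have hfaces := hx ν ν' h' hj
    have hfun : (fun a : Fin (m+4) =>
        (⟨(ν' : ℕ), by omega⟩ : Fin (m+6)).succAbove
          ((⟨(ν : ℕ), by omega⟩ : Fin (m+5)).succAbove a))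
        = (fun a => (⟨(ν : ℕ), by omega⟩ : Fin (m+6)).succAbove
          ((⟨(ν' : ℕ) - 1, by omega⟩ : Fin (m+5)).succAbove a)) :=
      funext (comp_succAbove m ν ν' h' hj)
    have fpj : (ν' : Fin (m+6)).succAbove ⟨(ν : ℕ), by omega⟩ = ν := by
      apply Fin.ext; rw [val_succAbove]; simp only [Fin.val_mk]; split_ifs <;> omega
    have fqi : (ν : Fin (m+6)).succAbove ⟨(ν' : ℕ) - 1, by omega⟩ = ν' := by
      apply Fin.ext; rw [val_succAbove]; simp only [Fin.val_mk]; split_ifs <;> omega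
    exact transfer_core hfaces.symm hfun.symm fqi fpj hG h1 h2

end TreeFill
namespace TreeFill
open Finset

variable {m : ℕ} {x : Fin (m + 6) → LTree (Fin (m + 5))}

lemma erase_dichotomy {α : Type*} [DecidableEq α] {E X : Finset α} {a : α}
    (h : E.erase a = X) (ha : a ∉ X) : E = X ∨ E = insert a X := by
  by_cases hm : a ∈ E
  · right; rw [← Finset.insert_erase hm, h]
  · left; rw [← h, Finset.erase_eq_self.mpr hm]

lemma compl_erase_erase {α : Type*} [Fintype α] [DecidableEq α] (s : Finset α) (a : α) :
    ((s.erase a)ᶜ).erase a = sᶜ.erase a := by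
  rw [Finset.compl_erase, Finset.erase_insert_eq_erase]

/-- The core combinatorial lemma: a split of `x μ` lifts to one side or the other
consistently with all the other faces, assuming its `μ`-side complement is large. -/
lemma lift3 (hx : Compat x) {μ : Fin (m+6)} {D : Finset (Fin (m+6))}
    (hD : D ∈ sx x μ) (hc3 : 3 ≤ (Dᶜ.erase μ).card) :
    (∀ ν, ν ≠ μ → 2 ≤ (D.erase ν).card → 2 ≤ (Dᶜ.erase ν).card → D.erase ν ∈ sx x ν) ∨
    (∀ ν, ν ≠ μ → 2 ≤ ((insert μ D).erase ν).card → 2 ≤ ((insert μ D)ᶜ.erase ν).card →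
      (insert μ D).erase ν ∈ sx x ν) := by
  have hμD : μ ∉ D := sx_not_mem hD
  have hDc : 2 ≤ D.card := sx_card hD
  by_contra hcon
  push_neg at hcon
  obtain ⟨⟨ν_t, hνt, ht1, ht2, ht3⟩, ⟨ν_f, hνf, hf1, hf2, hf3⟩⟩ := hcon
  have hμf : μ ≠ ν_f := fun h => hνf h.symm
  have hf3' : insert μ (D.erase ν_f) ∉ sx x ν_f := by
    rwa [Finset.erase_insert_of_ne hμf] at hf3
  -- every split of `x μ` transfers to `x ν` on one side or the other
  have keyE : ∀ ν, ν ≠ μ → 2 ≤ (D.erase ν).card →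
      (D.erase ν ∈ sx x ν ∨ insert μ (D.erase ν) ∈ sx x ν) := by
    intro ν hν h1
    have h2 : 2 ≤ ((Dᶜ.erase μ).erase ν).card := by
      have := Finset.pred_card_le_card_erase (s := Dᶜ.erase μ) (a := ν); omega
    obtain ⟨H, hH, hHe⟩ := transfer hx (Ne.symm hν) hD h1 h2
    have hμ' : μ ∉ D.erase ν := fun hm => hμD (Finset.mem_of_mem_erase hm)
    rcases erase_dichotomy hHe hμ' with rfl | rfl
    · exact Or.inl hH
    · exact Or.inr hH
  have hT : insert μ (D.erase ν_t) ∈ sx x ν_t := (keyE ν_t hνt ht1).resolve_left ht3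
  have hμt : μ ∉ D.erase ν_t := fun hm => hμD (Finset.mem_of_mem_erase hm)
  have hne_tf : ν_t ≠ ν_f := by rintro rfl; exact hf3' hT
  have hDcc : Dᶜ.card = (Dᶜ.erase μ).card + 1 := by
    have h0 : 0 < Dᶜ.card := Finset.card_pos.mpr ⟨μ, Finset.mem_compl.mpr hμD⟩
    rw [Finset.card_erase_of_mem (Finset.mem_compl.mpr hμD)]; omega
  -- Step 1: no `σ` outside `D` (other than `ν_t`) can have `D` as a split
  have step1 : ∀ σ, σ ∉ D → σ ≠ μ → σ ≠ ν_t → D ∉ sx x σ := by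
    intro σ hσD hσμ hσt hmem
    have hDσ : D.erase σ = D := Finset.erase_eq_self.mpr hσD
    have h2' : 2 ≤ ((Dᶜ.erase σ).erase ν_t).card := by
      have e2 := Finset.pred_card_le_card_erase (s := Dᶜ) (a := σ)
      have e3 := Finset.pred_card_le_card_erase (s := Dᶜ.erase σ) (a := ν_t)
      omega
    obtain ⟨H, hH, hHe⟩ := transfer hx hσt hmem ht1 h2'
    have hσ' : σ ∉ D.erase ν_t := fun hm => hσD (Finset.mem_of_mem_erase hm)
    rcases erase_dichotomy hHe hσ' with rfl | rfl
    · exact ht3 hH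
    · rcases sx_compat hT hH with h | h | h | h
      · obtain ⟨a, ha⟩ := Finset.card_pos.mp (by omega : 0 < (D.erase ν_t).card)
        have : a ∈ insert μ (D.erase ν_t) ∩ insert σ (D.erase ν_t) :=
          Finset.mem_inter.mpr ⟨Finset.mem_insert_of_mem ha, Finset.mem_insert_of_mem ha⟩
        rw [h] at this; exact absurd this (Finset.notMem_empty a)
      · have : μ ∈ insert μ (D.erase ν_t) \ insert σ (D.erase ν_t) := by
          rw [Finset.mem_sdiff]
          exact ⟨Finset.mem_insert_self _ _, by
            simp only [Finset.mem_insert, not_or]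
            exact ⟨fun he => hσμ he.symm, hμt⟩⟩
        rw [h] at this; exact absurd this (Finset.notMem_empty μ)
      · have : σ ∈ insert σ (D.erase ν_t) \ insert μ (D.erase ν_t) := by
          rw [Finset.mem_sdiff]
          exact ⟨Finset.mem_insert_self _ _, by
            simp only [Finset.mem_insert, not_or]
            exact ⟨hσμ, hσ'⟩⟩
        rw [h] at this; exact absurd this (Finset.notMem_empty σ)
      · have hsd : 1 ≤ ((Dᶜ.erase μ) \ {σ, ν_t}).card := by
          have := Finset.card_le_card_sdiff_add_card (s := Dᶜ.erase μ) (t := {σ, ν_t})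
          have h2 : ({σ, ν_t} : Finset (Fin (m+6))).card ≤ 2 := Finset.card_insert_le _ _ |>.trans (by simp)
          omega
        obtain ⟨ρ, hρ⟩ := Finset.card_pos.mp (by omega : 0 < ((Dᶜ.erase μ) \ {σ, ν_t}).card)
        rw [Finset.mem_sdiff] at hρ
        obtain ⟨hρ1, hρ2⟩ := hρ
        have hρμ : ρ ≠ μ := (Finset.mem_erase.mp hρ1).1
        have hρD : ρ ∉ D := Finset.mem_compl.mp (Finset.mem_of_mem_erase hρ1)
        simp only [Finset.mem_insert, Finset.mem_singleton, not_or] at hρ2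
        have : ρ ∈ ((insert μ (D.erase ν_t) ∪ insert σ (D.erase ν_t))ᶜ).erase ν_t := by
          rw [Finset.mem_erase, Finset.mem_compl]
          refine ⟨hρ2.2, ?_⟩
          simp only [Finset.mem_union, Finset.mem_insert, not_or]
          exact ⟨⟨hρμ, fun hm => hρD (Finset.mem_of_mem_erase hm)⟩,
            ⟨hρ2.1, fun hm => hρD (Finset.mem_of_mem_erase hm)⟩⟩
        rw [h] at this; exact absurd this (Finset.notMem_empty ρ)
  by_cases hfD : ν_f ∈ D
  · -- mixed / inside case: bring in two outside elements
    have hcard2 : 1 < ((Dᶜ.erase μ).erase ν_t).card := by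
      have := Finset.pred_card_le_card_erase (s := Dᶜ.erase μ) (a := ν_t); omega
    obtain ⟨σ₁, hσ₁, σ₂, hσ₂, hσne⟩ := Finset.one_lt_card.mp hcard2
    have key : ∀ σ, σ ∈ (Dᶜ.erase μ).erase ν_t →
        insert σ (insert μ (D.erase ν_f)) ∈ sx x ν_f := by
      intro σ hσ
      have hσt : σ ≠ ν_t := (Finset.mem_erase.mp hσ).1
      have hσμ : σ ≠ μ := (Finset.mem_erase.mp (Finset.mem_of_mem_erase hσ)).1
      have hσD : σ ∉ D :=
        Finset.mem_compl.mp (Finset.mem_of_mem_erase (Finset.mem_of_mem_erase hσ))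
      have hσf : σ ≠ ν_f := fun h => hσD (h ▸ hfD)
      have hmem : insert μ D ∈ sx x σ := by
        have hDσ : D.erase σ = D := Finset.erase_eq_self.mpr hσD
        have := (keyE σ hσμ (by rw [hDσ]; exact hDc)).resolve_left
          (by rw [hDσ]; exact step1 σ hσD hσμ hσt)
        rwa [hDσ] at this
      have hC : (insert μ D)ᶜ = Dᶜ.erase μ := Finset.compl_insert
      have hμf' : μ ∉ D.erase ν_f := fun hm => hμD (Finset.mem_of_mem_erase hm)
      have h1' : 2 ≤ ((insert μ D).erase ν_f).card := by
        rw [Finset.erase_insert_of_ne hμf, Finset.card_insert_of_notMem hμf',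
          Finset.card_erase_of_mem hfD]
        omega
      have h2' : 2 ≤ (((insert μ D)ᶜ.erase σ).erase ν_f).card := by
        rw [hC]
        have hνf' : ν_f ∉ (Dᶜ.erase μ).erase σ := fun h =>
          (Finset.mem_compl.mp (Finset.mem_of_mem_erase (Finset.mem_of_mem_erase h))) hfD
        rw [Finset.erase_eq_self.mpr hνf']
        have := Finset.pred_card_le_card_erase (s := Dᶜ.erase μ) (a := σ); omega
      obtain ⟨H, hH, hHe⟩ := transfer hx hσf hmem h1' h2'
      rw [Finset.erase_insert_of_ne hμf] at hHe
      have hσ' : σ ∉ insert μ (D.erase ν_f) := by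
        simp only [Finset.mem_insert, not_or]
        exact ⟨hσμ, fun hm => hσD (Finset.mem_of_mem_erase hm)⟩
      rcases erase_dichotomy hHe hσ' with rfl | rfl
      · exact absurd hH hf3'
      · exact hH
    have H1 := key σ₁ hσ₁
    have H2 := key σ₂ hσ₂
    have hσ₁t : σ₁ ≠ ν_t := (Finset.mem_erase.mp hσ₁).1
    have hσ₂t : σ₂ ≠ ν_t := (Finset.mem_erase.mp hσ₂).1
    have hσ₁μ : σ₁ ≠ μ := (Finset.mem_erase.mp (Finset.mem_of_mem_erase hσ₁)).1
    have hσ₂μ : σ₂ ≠ μ := (Finset.mem_erase.mp (Finset.mem_of_mem_erase hσ₂)).1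
    have hσ₁D : σ₁ ∉ D :=
      Finset.mem_compl.mp (Finset.mem_of_mem_erase (Finset.mem_of_mem_erase hσ₁))
    have hσ₂D : σ₂ ∉ D :=
      Finset.mem_compl.mp (Finset.mem_of_mem_erase (Finset.mem_of_mem_erase hσ₂))
    rcases sx_compat H1 H2 with h | h | h | h
    · have : μ ∈ insert σ₁ (insert μ (D.erase ν_f)) ∩ insert σ₂ (insert μ (D.erase ν_f)) := by
        rw [Finset.mem_inter]
        constructor <;> exact Finset.mem_insert_of_mem (Finset.mem_insert_self _ _)
      rw [h] at this; exact absurd this (Finset.notMem_empty μ)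
    · have : σ₁ ∈ insert σ₁ (insert μ (D.erase ν_f)) \ insert σ₂ (insert μ (D.erase ν_f)) := by
        rw [Finset.mem_sdiff]
        refine ⟨Finset.mem_insert_self _ _, ?_⟩
        simp only [Finset.mem_insert, not_or]
        exact ⟨hσne, hσ₁μ, fun hm => hσ₁D (Finset.mem_of_mem_erase hm)⟩
      rw [h] at this; exact absurd this (Finset.notMem_empty σ₁)
    · have : σ₂ ∈ insert σ₂ (insert μ (D.erase ν_f)) \ insert σ₁ (insert μ (D.erase ν_f)) := by
        rw [Finset.mem_sdiff]
        refine ⟨Finset.mem_insert_self _ _, ?_⟩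
        simp only [Finset.mem_insert, not_or]
        exact ⟨fun he => hσne he.symm, hσ₂μ, fun hm => hσ₂D (Finset.mem_of_mem_erase hm)⟩
      rw [h] at this; exact absurd this (Finset.notMem_empty σ₂)
    · have hsd : 1 ≤ ((Dᶜ.erase μ) \ {σ₁, σ₂}).card := by
        have := Finset.card_le_card_sdiff_add_card (s := Dᶜ.erase μ) (t := {σ₁, σ₂})
        have h2 : ({σ₁, σ₂} : Finset (Fin (m+6))).card ≤ 2 :=
          Finset.card_insert_le _ _ |>.trans (by simp)
        omega
      obtain ⟨ρ, hρ⟩ := Finset.card_pos.mp (by omega : 0 < ((Dᶜ.erase μ) \ {σ₁, σ₂}).card)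
      rw [Finset.mem_sdiff] at hρ
      obtain ⟨hρ1, hρ2⟩ := hρ
      have hρμ : ρ ≠ μ := (Finset.mem_erase.mp hρ1).1
      have hρD : ρ ∉ D := Finset.mem_compl.mp (Finset.mem_of_mem_erase hρ1)
      have hρf : ρ ≠ ν_f := fun he => hρD (he ▸ hfD)
      simp only [Finset.mem_insert, Finset.mem_singleton, not_or] at hρ2
      have : ρ ∈ ((insert σ₁ (insert μ (D.erase ν_f)) ∪
          insert σ₂ (insert μ (D.erase ν_f)))ᶜ).erase ν_f := by
        rw [Finset.mem_erase, Finset.mem_compl]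
        refine ⟨hρf, ?_⟩
        simp only [Finset.mem_union, Finset.mem_insert, not_or]
        exact ⟨⟨hρ2.1, hρμ, fun hm => hρD (Finset.mem_of_mem_erase hm)⟩,
          ⟨hρ2.2, hρμ, fun hm => hρD (Finset.mem_of_mem_erase hm)⟩⟩
      rw [h] at this; exact absurd this (Finset.notMem_empty ρ)
  · -- `ν_f ∉ D`
    have hDf : D.erase ν_f = D := Finset.erase_eq_self.mpr hfD
    have h1 : 2 ≤ (D.erase ν_f).card := by rw [hDf]; exact hDc
    rcases keyE ν_f hνf h1 with hmem | hmem
    · rw [hDf] at hmem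
      exact step1 ν_f hfD hνf (fun he => hne_tf he.symm) hmem
    · rw [hDf] at hmem
      rw [hDf] at hf3'
      exact hf3' hmem

/-- Lifting a split of the `μ`-th face to a candidate split of the filler. -/
lemma lift (hx : Compat x) {μ : Fin (m+6)} {D : Finset (Fin (m+6))} (hD : D ∈ sx x μ) :
    ∃ B : Finset (Fin (m+6)), (B = D ∨ B = insert μ D) ∧
      ∀ ν, ν ≠ μ → 2 ≤ (B.erase ν).card → 2 ≤ (Bᶜ.erase ν).card → B.erase ν ∈ sx x ν := by
  have hμD : μ ∉ D := sx_not_mem hD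
  by_cases h3 : 3 ≤ (Dᶜ.erase μ).card
  · rcases lift3 hx hD h3 with h | h
    · exact ⟨D, Or.inl rfl, h⟩
    · exact ⟨insert μ D, Or.inr rfl, h⟩
  · have hD' : Dᶜ.erase μ ∈ sx x μ := sx_compl hD
    have hcompl : (Dᶜ.erase μ)ᶜ = insert μ D := by
      rw [Finset.compl_erase, compl_compl]
    have h3' : 3 ≤ ((Dᶜ.erase μ)ᶜ.erase μ).card := by
      rw [hcompl, Finset.erase_insert hμD]
      have e1 : Dᶜ.card = (Dᶜ.erase μ).card + 1 := by
        have h0 : 0 < Dᶜ.card := Finset.card_pos.mpr ⟨μ, Finset.mem_compl.mpr hμD⟩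
        rw [Finset.card_erase_of_mem (Finset.mem_compl.mpr hμD)]; omega
      have e2 : D.card + Dᶜ.card = m + 6 := by
        have := Finset.card_add_card_compl D
        simpa using this
      omega
    rcases lift3 hx hD' h3' with h | h
    · -- take B = insert μ D, the complement of Dᶜ.erase μ
      refine ⟨insert μ D, Or.inr rfl, ?_⟩
      intro ν hν hb1 hb2
      have hBc : (insert μ D)ᶜ = Dᶜ.erase μ := Finset.compl_insert
      have h' := h ν hν (by rw [hBc] at hb2; exact hb2) (by rw [hcompl]; exact hb1)
      have := sx_compl h'
      rwa [compl_erase_erase, hcompl] at this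
    · -- take B = D, the complement of insert μ (Dᶜ.erase μ) = Dᶜ
      refine ⟨D, Or.inl rfl, ?_⟩
      intro ν hν hb1 hb2
      have hB' : insert μ (Dᶜ.erase μ) = Dᶜ :=
        Finset.insert_erase (Finset.mem_compl.mpr hμD)
      have h' := h ν hν (by rw [hB']; exact hb2) (by rw [hB', compl_compl]; exact hb1)
      rw [hB'] at h'
      have := sx_compl h'
      rwa [compl_erase_erase, compl_compl] at this

end TreeFill
namespace TreeFill
open Finset

variable {m : ℕ} {x : Fin (m + 6) → LTree (Fin (m + 5))}

/-- The candidate splits of the filler. -/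
def pred (x : Fin (m + 6) → LTree (Fin (m + 5))) (B : Finset (Fin (m+6))) : Prop :=
  2 ≤ B.card ∧ 2 ≤ Bᶜ.card ∧
    ∀ ν, 2 ≤ (B.erase ν).card → 2 ≤ (Bᶜ.erase ν).card → B.erase ν ∈ sx x ν

instance : DecidablePred (pred x) := fun _ => by unfold pred; infer_instance

lemma pred_compl {B : Finset (Fin (m+6))} (hB : pred x B) : pred x Bᶜ := by
  refine ⟨hB.2.1, by rw [compl_compl]; exact hB.1, fun ν h1 h2 => ?_⟩
  have h := hB.2.2 ν (by rwa [compl_compl] at h2) h1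
  have := sx_compl h
  rwa [compl_erase_erase] at this

lemma corner {B C : Finset (Fin (m+6))} (hB : pred x B) (hC : pred x C)
    {μ μ' b c ρ : Fin (m+6)} (hμ : μ ∈ B ∩ C) (hμ' : μ' ∈ B ∩ C) (hne : μ ≠ μ')
    (hb : b ∈ B ∧ b ∉ C) (hc : c ∈ C ∧ c ∉ B) (hρ : ρ ∉ B ∧ ρ ∉ C) : False := by
  rw [Finset.mem_inter] at hμ hμ'
  have h2 : 2 ≤ (B ∩ C).card := Finset.one_lt_card.mpr
    ⟨μ, Finset.mem_inter.mpr hμ, μ', Finset.mem_inter.mpr hμ', hne⟩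
  have hbBC : b ∈ B \ C := Finset.mem_sdiff.mpr hb
  have hcCB : c ∈ C \ B := Finset.mem_sdiff.mpr hc
  have hBcard : 3 ≤ B.card := by
    have e := Finset.card_inter_add_card_sdiff B C
    have : 0 < (B \ C).card := Finset.card_pos.mpr ⟨b, hbBC⟩
    omega
  have hCcard : 3 ≤ C.card := by
    have e := Finset.card_inter_add_card_sdiff C B
    have : 0 < (C \ B).card := Finset.card_pos.mpr ⟨c, hcCB⟩
    rw [Finset.inter_comm] at e
    omega
  have hBe : 2 ≤ (B.erase μ).card := by
    rw [Finset.card_erase_of_mem hμ.1]; omega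
  have hCe : 2 ≤ (C.erase μ).card := by
    rw [Finset.card_erase_of_mem hμ.2]; omega
  have hcρ : c ≠ ρ := fun he => hρ.2 (he ▸ hc.1)
  have hBce : 2 ≤ (Bᶜ.erase μ).card := Finset.one_lt_card.mpr
    ⟨c, Finset.mem_erase.mpr ⟨fun he => hc.2 (he ▸ hμ.1), Finset.mem_compl.mpr hc.2⟩,
     ρ, Finset.mem_erase.mpr ⟨fun he => hρ.1 (he ▸ hμ.1), Finset.mem_compl.mpr hρ.1⟩, hcρ⟩
  have hbρ : b ≠ ρ := fun he => hρ.1 (he ▸ hb.1)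
  have hCce : 2 ≤ (Cᶜ.erase μ).card := Finset.one_lt_card.mpr
    ⟨b, Finset.mem_erase.mpr ⟨fun he => hb.2 (he ▸ hμ.2), Finset.mem_compl.mpr hb.2⟩,
     ρ, Finset.mem_erase.mpr ⟨fun he => hρ.2 (he ▸ hμ.2), Finset.mem_compl.mpr hρ.2⟩, hbρ⟩
  have hEB : B.erase μ ∈ sx x μ := hB.2.2 μ hBe hBce
  have hEC : C.erase μ ∈ sx x μ := hC.2.2 μ hCe hCce
  rcases sx_compat hEB hEC with h | h | h | h
  · have : μ' ∈ (B.erase μ) ∩ (C.erase μ) := Finset.mem_inter.mpr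
      ⟨Finset.mem_erase.mpr ⟨Ne.symm hne, hμ'.1⟩, Finset.mem_erase.mpr ⟨Ne.symm hne, hμ'.2⟩⟩
    rw [h] at this; exact absurd this (Finset.notMem_empty μ')
  · have : b ∈ (B.erase μ) \ (C.erase μ) := Finset.mem_sdiff.mpr
      ⟨Finset.mem_erase.mpr ⟨fun he => hb.2 (he ▸ hμ.2), hb.1⟩,
       fun hm => hb.2 (Finset.mem_of_mem_erase hm)⟩
    rw [h] at this; exact absurd this (Finset.notMem_empty b)
  · have : c ∈ (C.erase μ) \ (B.erase μ) := Finset.mem_sdiff.mpr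
      ⟨Finset.mem_erase.mpr ⟨fun he => hc.2 (he ▸ hμ.1), hc.1⟩,
       fun hm => hc.2 (Finset.mem_of_mem_erase hm)⟩
    rw [h] at this; exact absurd this (Finset.notMem_empty c)
  · have : ρ ∈ ((B.erase μ ∪ C.erase μ)ᶜ).erase μ := by
      rw [Finset.mem_erase, Finset.mem_compl]
      refine ⟨fun he => hρ.1 (he ▸ hμ.1), ?_⟩
      simp only [Finset.mem_union, not_or]
      exact ⟨fun hm => hρ.1 (Finset.mem_of_mem_erase hm),
        fun hm => hρ.2 (Finset.mem_of_mem_erase hm)⟩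
    rw [h] at this; exact absurd this (Finset.notMem_empty ρ)

/-- The filler tree. -/
def filler (x : Fin (m + 6) → LTree (Fin (m + 5))) : LTree (Fin (m+6)) where
  splits := Finset.univ.filter (pred x)
  compl_mem := by
    intro B hB
    exact Finset.mem_filter.mpr ⟨Finset.mem_univ _, pred_compl (Finset.mem_filter.mp hB).2⟩
  two_le := fun B hB => ((Finset.mem_filter.mp hB).2).1
  two_le_compl := fun B hB => ((Finset.mem_filter.mp hB).2).2.1
  compat := by
    intro B hB C hC
    have hpB := (Finset.mem_filter.mp hB).2
    have hpC := (Finset.mem_filter.mp hC).2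
    by_contra hcon
    push_neg at hcon
    obtain ⟨h1, h2, h3, h4⟩ := hcon
    have d1 : B \ C = B ∩ Cᶜ := sdiff_eq
    have d2 : Bᶜ \ C = Bᶜ ∩ Cᶜ := sdiff_eq
    have e1 := Finset.card_inter_add_card_sdiff B C
    have e2 := Finset.card_inter_add_card_sdiff Bᶜ C
    rw [d1] at e1
    rw [d2] at e2
    have e3 : B.card + Bᶜ.card = m + 6 := by
      have := Finset.card_add_card_compl B
      simpa using this
    have c1 : 0 < (B ∩ C).card := Finset.card_pos.mpr h1
    have c2 : 0 < (B ∩ Cᶜ).card := Finset.card_pos.mpr h2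
    have c3 : 0 < (Bᶜ ∩ C).card := Finset.card_pos.mpr h3
    have c4 : 0 < (Bᶜ ∩ Cᶜ).card := Finset.card_pos.mpr h4
    obtain ⟨a1, ha1⟩ := h1
    obtain ⟨a2, ha2⟩ := h2
    obtain ⟨a3, ha3⟩ := h3
    obtain ⟨a4, ha4⟩ := h4
    simp only [Finset.mem_inter, Finset.mem_compl] at ha1 ha2 ha3 ha4
    have hbig : 2 ≤ (B ∩ C).card ∨ 2 ≤ (B ∩ Cᶜ).card ∨ 2 ≤ (Bᶜ ∩ C).card ∨
        2 ≤ (Bᶜ ∩ Cᶜ).card := by omega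
    rcases hbig with hbig | hbig | hbig | hbig
    · obtain ⟨μ, hμ, μ', hμ', hμne⟩ := Finset.one_lt_card.mp hbig
      exact corner hpB hpC hμ hμ' hμne ⟨ha2.1, ha2.2⟩ ⟨ha3.2, ha3.1⟩ ⟨ha4.1, ha4.2⟩
    · obtain ⟨μ, hμ, μ', hμ', hμne⟩ := Finset.one_lt_card.mp hbig
      exact corner hpB (pred_compl hpC) hμ hμ' hμne
        ⟨ha1.1, fun hm => (Finset.mem_compl.mp hm) ha1.2⟩
        ⟨Finset.mem_compl.mpr ha4.2, ha4.1⟩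
        ⟨ha3.1, fun hm => (Finset.mem_compl.mp hm) ha3.2⟩
    · obtain ⟨μ, hμ, μ', hμ', hμne⟩ := Finset.one_lt_card.mp hbig
      exact corner (pred_compl hpB) hpC hμ hμ' hμne
        ⟨Finset.mem_compl.mpr ha4.1, ha4.2⟩
        ⟨ha1.2, fun hm => (Finset.mem_compl.mp hm) ha1.1⟩
        ⟨fun hm => (Finset.mem_compl.mp hm) ha2.1, ha2.2⟩
    · obtain ⟨μ, hμ, μ', hμ', hμne⟩ := Finset.one_lt_card.mp hbig
      exact corner (pred_compl hpB) (pred_compl hpC) hμ hμ' hμne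
        ⟨Finset.mem_compl.mpr ha3.1, fun hm => (Finset.mem_compl.mp hm) ha3.2⟩
        ⟨Finset.mem_compl.mpr ha2.2, fun hm => (Finset.mem_compl.mp hm) ha2.1⟩
        ⟨fun hm => (Finset.mem_compl.mp hm) ha1.1, fun hm => (Finset.mem_compl.mp hm) ha1.2⟩

end TreeFill
namespace TreeFill
open Finset

variable {m : ℕ} {x : Fin (m + 6) → LTree (Fin (m + 5))}

lemma filler_faces (hx : Compat x) : ∀ ν, LTree.face ν (filler x) = x ν := by
  intro ν
  rw [face_eq_iff]
  intro G
  constructor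
  · intro hG
    obtain ⟨B, hBor, hB⟩ := lift hx hG
    have hνG : ν ∉ G := sx_not_mem hG
    have hGc : 2 ≤ G.card := sx_card hG
    have hGcc : 2 ≤ (Gᶜ.erase ν).card := sx_card_compl hG
    have hBe : B.erase ν = G := by
      rcases hBor with rfl | rfl
      · exact Finset.erase_eq_self.mpr hνG
      · exact Finset.erase_insert hνG
    have hBce : Bᶜ.erase ν = Gᶜ.erase ν := by
      rcases hBor with rfl | rfl
      · rfl
      · rw [Finset.compl_insert, Finset.erase_idem]
    have hpred : pred x B := by
      refine ⟨?_, ?_, fun ρ h1 h2 => ?_⟩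
      · calc 2 ≤ G.card := hGc
          _ = (B.erase ν).card := by rw [hBe]
          _ ≤ B.card := Finset.card_erase_le
      · calc 2 ≤ (Gᶜ.erase ν).card := hGcc
          _ = (Bᶜ.erase ν).card := by rw [hBce]
          _ ≤ Bᶜ.card := Finset.card_erase_le
      · by_cases hρ : ρ = ν
        · subst hρ; rw [hBe]; exact hG
        · exact hB ρ hρ h1 h2
    exact ⟨B, Finset.mem_filter.mpr ⟨Finset.mem_univ _, hpred⟩, hBe.symm,
      by rw [hBe]; exact hGc, by rw [hBce]; exact hGcc⟩
  · rintro ⟨C, hC, rfl, h1, h2⟩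
    exact ((Finset.mem_filter.mp hC).2).2.2 ν h1 h2

lemma fill_sub {y y' : LTree (Fin (m+6))} (hy : ∀ ν, LTree.face ν y = x ν)
    (hy' : ∀ ν, LTree.face ν y' = x ν) {B : Finset (Fin (m+6))}
    (hB : B ∈ y.splits) (h3 : 3 ≤ Bᶜ.card) : B ∈ y'.splits := by
  obtain ⟨μ₁, hμ₁, μ₂, hμ₂, hμne⟩ := Finset.one_lt_card.mp (show 1 < Bᶜ.card by omega)
  have hBc : 2 ≤ B.card := y.two_le B hB
  have hget : ∀ μ ∈ Bᶜ, ∃ C ∈ y'.splits, C.erase μ = B := by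
    intro μ hμ
    have hμB : μ ∉ B := Finset.mem_compl.mp hμ
    have hBeμ : B.erase μ = B := Finset.erase_eq_self.mpr hμB
    have hcc : 2 ≤ (Bᶜ.erase μ).card := by
      rw [Finset.card_erase_of_mem hμ]; omega
    have hmem : B ∈ sx x μ := by
      rw [(face_eq_iff y μ).mp (hy μ) B]
      exact ⟨B, hB, hBeμ.symm, by rw [hBeμ]; exact hBc, hcc⟩
    obtain ⟨C, hC, he, -, -⟩ := ((face_eq_iff y' μ).mp (hy' μ) B).mp hmem
    exact ⟨C, hC, he.symm⟩
  obtain ⟨C₁, hC₁, he₁⟩ := hget μ₁ hμ₁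
  obtain ⟨C₂, hC₂, he₂⟩ := hget μ₂ hμ₂
  have hμ₁B : μ₁ ∉ B := Finset.mem_compl.mp hμ₁
  have hμ₂B : μ₂ ∉ B := Finset.mem_compl.mp hμ₂
  rcases erase_dichotomy he₁ hμ₁B with rfl | rfl
  · exact hC₁
  rcases erase_dichotomy he₂ hμ₂B with rfl | rfl
  · exact hC₂
  exfalso
  rcases y'.compat _ hC₁ _ hC₂ with h | h | h | h
  · obtain ⟨b, hb⟩ := Finset.card_pos.mp (show 0 < B.card by omega)
    have : b ∈ insert μ₁ B ∩ insert μ₂ B :=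
      Finset.mem_inter.mpr ⟨Finset.mem_insert_of_mem hb, Finset.mem_insert_of_mem hb⟩
    rw [h] at this; exact absurd this (Finset.notMem_empty b)
  · have : μ₁ ∈ insert μ₁ B ∩ (insert μ₂ B)ᶜ := Finset.mem_inter.mpr
      ⟨Finset.mem_insert_self _ _, Finset.mem_compl.mpr (by
        simp only [Finset.mem_insert, not_or]; exact ⟨hμne, hμ₁B⟩)⟩
    rw [h] at this; exact absurd this (Finset.notMem_empty μ₁)
  · have : μ₂ ∈ (insert μ₁ B)ᶜ ∩ insert μ₂ B := Finset.mem_inter.mpr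
      ⟨Finset.mem_compl.mpr (by
        simp only [Finset.mem_insert, not_or]; exact ⟨fun he => hμne he.symm, hμ₂B⟩),
       Finset.mem_insert_self _ _⟩
    rw [h] at this; exact absurd this (Finset.notMem_empty μ₂)
  · have hsd : 1 ≤ (Bᶜ \ {μ₁, μ₂}).card := by
      have := Finset.card_le_card_sdiff_add_card (s := Bᶜ) (t := {μ₁, μ₂})
      have h2 : ({μ₁, μ₂} : Finset (Fin (m+6))).card ≤ 2 :=
        Finset.card_insert_le _ _ |>.trans (by simp)
      omega
    obtain ⟨ρ, hρ⟩ := Finset.card_pos.mp (show 0 < (Bᶜ \ {μ₁, μ₂}).card by omega)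
    rw [Finset.mem_sdiff] at hρ
    have hρB : ρ ∉ B := Finset.mem_compl.mp hρ.1
    have hρ2 := hρ.2
    simp only [Finset.mem_insert, Finset.mem_singleton, not_or] at hρ2
    have : ρ ∈ (insert μ₁ B)ᶜ ∩ (insert μ₂ B)ᶜ := Finset.mem_inter.mpr
      ⟨Finset.mem_compl.mpr (by simp only [Finset.mem_insert, not_or]; exact ⟨hρ2.1, hρB⟩),
       Finset.mem_compl.mpr (by simp only [Finset.mem_insert, not_or]; exact ⟨hρ2.2, hρB⟩)⟩
    rw [h] at this; exact absurd this (Finset.notMem_empty ρ)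

lemma fill_sub' {y y' : LTree (Fin (m+6))} (hy : ∀ ν, LTree.face ν y = x ν)
    (hy' : ∀ ν, LTree.face ν y' = x ν) {B : Finset (Fin (m+6))}
    (hB : B ∈ y.splits) : B ∈ y'.splits := by
  by_cases h3 : 3 ≤ Bᶜ.card
  · exact fill_sub hy hy' hB h3
  · have h2 : 2 ≤ Bᶜ.card := y.two_le_compl B hB
    have hcard : B.card + Bᶜ.card = m + 6 := by
      have := Finset.card_add_card_compl B
      simpa using this
    have h3' : 3 ≤ (Bᶜ)ᶜ.card := by rw [compl_compl]; omega
    have := fill_sub hy hy' (y.compl_mem B hB) h3'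
    have := y'.compl_mem _ this
    rwa [compl_compl] at this

lemma fill_unique {y y' : LTree (Fin (m+6))} (hy : ∀ ν, LTree.face ν y = x ν)
    (hy' : ∀ ν, LTree.face ν y' = x ν) : y = y' := by
  apply LTree.ext'
  apply Finset.Subset.antisymm
  · exact fun B hB => fill_sub' hy hy' hB
  · exact fun B hB => fill_sub' hy' hy hB

end TreeFill

/-- For `n = m + 5 ≥ 5` the Δ-set of leaf-labelled trees is
uniquely fillable in dimension `n`: given `x₀, …, x_n ∈ T_{n-1}` with
`∂_i (x j) = ∂_{j-1} (x i)` for all `i < j`, there is a unique `y ∈ T_n`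
with `∂_i y = x i` for all `i`. -/
theorem trees_uniquely_fillable (m : ℕ) (x : Fin (m + 6) → LTree (Fin (m + 5)))
    (hcompat : ∀ (i j : ℕ) (hij : i < j) (hj : j ≤ m + 5),
      LTree.face ⟨i, by omega⟩ (x ⟨j, by omega⟩) =
        LTree.face ⟨j - 1, by omega⟩ (x ⟨i, by omega⟩)) :
    ∃! y : LTree (Fin (m + 6)), ∀ k : Fin (m + 6), LTree.face k y = x k := by
  have hx : TreeFill.Compat x := hcompat
  exact ⟨TreeFill.filler x, TreeFill.filler_faces hx,
    fun y' hy' => TreeFill.fill_unique hy' (TreeFill.filler_faces hx)⟩
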